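/- If R is a finite commutative ring that is not a field, then the extended zero-divisor graph Γ̃(R) has a vertex adjacent to every other vertex: there exists a ∈ Z(R)* such that for all x ∈ Z(R)* with x ≠ a, either ax = 0 or a + x ∈ Z(R). -/

import Mathlib

def ZDStar {R : Type*} [CommRing R] (x : R) : Prop := x ≠ 0 ∧ ∃ y ≠ 0, x * y = 0

lemma exists_ann_of_not_isUnit {R : Type*} [CommRing R] [Nontrivial R] [Finite R] {w : R}
    (h : ¬ IsUnit w) : ∃ z ≠ 0, w * z = 0 := by
  by_contra h'
  push_neg at h'
  have hinj : Function.Injective (fun y : R => w * y) := by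
    intro y1 y2 hy
    simp only at hy
    by_contra hne
    have : w * (y1 - y2) = 0 := by rw [mul_sub, hy, sub_self]
    exact h' (y1 - y2) (sub_ne_zero.mpr hne) this
  obtain ⟨y, hy⟩ := (Finite.injective_iff_surjective.mp hinj) 1
  exact h (IsUnit.of_mul_eq_one y hy)

theorem stmt11 {R : Type*} [CommRing R] [Nontrivial R] [Finite R] (hR : ¬ IsField R) :
    ∃ a : R, ZDStar a ∧ ∀ x : R, ZDStar x → x ≠ a →
      (a * x = 0 ∨ ∃ z ≠ 0, (a + x) * z = 0) := by
  classical
  have := Fintype.ofFinite R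
  obtain ⟨b, hb0, hbu⟩ := Ring.exists_not_isUnit_of_not_isField hR
  obtain ⟨c, hc0, hbc⟩ := exists_ann_of_not_isUnit hbu
  -- annihilator cardinality
  set Ann : R → Finset R := fun x => Finset.univ.filter (fun y => x * y = 0) with hAnn
  set T : Finset R := Finset.univ.filter (fun x => x ≠ 0 ∧ ∀ y, b * y = 0 → x * y = 0) with hT
  have hbT : b ∈ T := by
    simp only [hT, Finset.mem_filter, Finset.mem_univ, true_and]
    exact ⟨hb0, fun y hy => hy⟩
  obtain ⟨a, haT, hmax⟩ := T.exists_max_image (fun x => (Ann x).card) ⟨b, hbT⟩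
  simp only [hT, Finset.mem_filter, Finset.mem_univ, true_and] at haT
  obtain ⟨ha0, haAnn⟩ := haT
  have hac : a * c = 0 := haAnn c hbc
  -- prime property of the annihilator of a
  have hprime : ∀ r s : R, a * (r * s) = 0 → a * r ≠ 0 → a * s = 0 := by
    intro r s hrs har
    have harT : a * r ∈ T := by
      simp only [hT, Finset.mem_filter, Finset.mem_univ, true_and]
      refine ⟨har, fun y hy => ?_⟩
      have : a * y = 0 := haAnn y hy
      calc a * r * y = (a * y) * r := by ring
        _ = 0 := by rw [this]; ring
    have hsub : Ann a ⊆ Ann (a * r) := by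
      intro y hy
      simp only [hAnn, Finset.mem_filter, Finset.mem_univ, true_and] at hy ⊢
      calc a * r * y = (a * y) * r := by ring
        _ = 0 := by rw [hy]; ring
    have hle := hmax (a * r) harT
    have heq : Ann a = Ann (a * r) := Finset.eq_of_subset_of_card_le hsub hle
    have hs : s ∈ Ann (a * r) := by
      simp only [hAnn, Finset.mem_filter, Finset.mem_univ, true_and]
      calc a * r * s = a * (r * s) := by ring
        _ = 0 := hrs
    rw [← heq] at hs
    simpa only [hAnn, Finset.mem_filter, Finset.mem_univ, true_and] using hs
  -- the annihilator of a as an ideal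
  let P : Ideal R :=
    { carrier := {y | a * y = 0}
      add_mem' := fun {x y} hx hy => by
        simp only [Set.mem_setOf_eq] at *
        rw [mul_add, hx, hy, add_zero]
      zero_mem' := by simp
      smul_mem' := fun c x hx => by
        simp only [Set.mem_setOf_eq, smul_eq_mul] at *
        calc a * (c * x) = c * (a * x) := by ring
          _ = 0 := by rw [hx]; ring }
  have hmemP : ∀ y : R, y ∈ P ↔ a * y = 0 := fun y => Iff.rfl
  have hPprime : P.IsPrime := by
    constructor
    · intro htop
      have : (1 : R) ∈ P := htop ▸ Submodule.mem_top
      rw [hmemP, mul_one] at this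
      exact ha0 this
    · intro x y hxy
      rw [hmemP] at hxy
      by_cases hx : a * x = 0
      · exact Or.inl ((hmemP x).mpr hx)
      · exact Or.inr ((hmemP y).mpr (hprime x y hxy hx))
  -- P is maximal since R ⧸ P is a finite domain
  have hPmax : P.IsMaximal := by
    have : IsDomain (R ⧸ P) := Ideal.Quotient.isDomain P
    have : Finite (R ⧸ P) := Quotient.finite _
    exact Ideal.Quotient.maximal_of_isField P (Finite.isField_of_domain (R ⧸ P))
  refine ⟨a, ⟨ha0, c, hc0, hac⟩, ?_⟩
  rintro x ⟨hx0, y, hy0, hxy⟩ _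
  by_cases hax : a * x = 0
  · exact Or.inl hax
  right
  -- x is not a unit
  have hxu : ¬ IsUnit x := by
    rintro ⟨u, rfl⟩
    apply hy0
    calc y = (↑u⁻¹ * u) * y := by simp
      _ = ↑u⁻¹ * (↑u * y) := by ring
      _ = 0 := by rw [hxy]; ring
  -- find a maximal ideal containing x
  have hspan : Ideal.span {x} ≠ ⊤ := fun h => hxu (Ideal.span_singleton_eq_top.mp h)
  obtain ⟨M, hM, hxM⟩ := Ideal.exists_le_maximal _ hspan
  have hxM' : x ∈ M := hxM (Ideal.subset_span rfl)
  have hne : P ≠ M := by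
    intro h
    exact hax ((hmemP x).mp (h ▸ hxM'))
  -- a ∈ M : write 1 = s + u with s ∈ P, u ∈ M
  have hcop : P ⊔ M = ⊤ := Ideal.IsMaximal.coprime_of_ne hPmax hM hne
  have h1 : (1 : R) ∈ P ⊔ M := hcop ▸ Submodule.mem_top
  obtain ⟨s, hs, u, hu, hsu⟩ := Submodule.mem_sup.mp h1
  have haM : a ∈ M := by
    have : a = a * u := by
      have has : a * s = 0 := (hmemP s).mp hs
      calc a = a * (s + u) := by rw [hsu, mul_one]
        _ = a * s + a * u := by ring
        _ = a * u := by rw [has, zero_add]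
    rw [this]
    exact M.mul_mem_left a hu
  have haxM : a + x ∈ M := M.add_mem haM hxM'
  have haxu : ¬ IsUnit (a + x) := fun h => hM.ne_top (Ideal.eq_top_of_isUnit_mem M haxM h)
  exact exists_ann_of_not_isUnit haxu
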